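/- Fix a real number p with 0 < p < 1, ε with 0 < ε < 1/2, and λ with 0 < λ < 1/(1 + e·q) where q = 1/p; for each n let r = r(n) = ⌊z(n,p) − ε⌋. Then there exists N > 0 such that for all n ≥ N the following holds: if α = (a,b,c,d) ∈ D and α' = (a+1,b,c,d) ∈ D, with a ≤ r/2 and max(b,c) > (1−λ)·log_q n, then T_α > T_{α'}. -/

import Mathlib

open Finset Filter

noncomputable section

/-- `z(n,p) = 2 log_q n − 2 log_q log_q n + 2 log_q (e/2) + 1`, where `q = 1/p`. -/
def zf (p : ℝ) (n : ℕ) : ℝ :=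
  2 * Real.logb p⁻¹ n - 2 * Real.logb p⁻¹ (Real.logb p⁻¹ n)
    + 2 * Real.logb p⁻¹ (Real.exp 1 / 2) + 1

/-- The set `D` of vectors `(a,b,c,d)` of nonnegative integers with
`a+b ≤ r`, `a+c ≤ r`, `c+d ≤ r`, `b+d ≤ r`. -/
def Dset (r : ℕ) : Finset (ℕ × ℕ × ℕ × ℕ) :=
  (Finset.range (r+1) ×ˢ Finset.range (r+1) ×ˢ Finset.range (r+1) ×ˢ Finset.range (r+1)).filter
    (fun α => α.1 + α.2.1 ≤ r ∧ α.1 + α.2.2.1 ≤ r ∧ α.2.2.1 + α.2.2.2 ≤ r ∧ α.2.1 + α.2.2.2 ≤ r)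

/-- The coefficient `F_α` for `α = (a,b,c,d)`. -/
def Fa (n r : ℕ) (α : ℕ × ℕ × ℕ × ℕ) : ℝ :=
  match α with
  | (a, b, c, d) =>
    ((r.factorial : ℝ) / ((a.factorial : ℝ) * c.factorial * (r - a - c).factorial)) *
    ((r.factorial : ℝ) / ((b.factorial : ℝ) * d.factorial * (r - b - d).factorial)) *
    (((n - 2*r).factorial : ℝ) /
      (((r - a - b).factorial : ℝ) * (r - c - d).factorial * (n - 4*r + a + b + c + d).factorial)) /
    ((n.factorial : ℝ) / ((r.factorial : ℝ) * r.factorial * (n - 2*r).factorial))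

/-- `L(α) = C(a,2) + C(b,2) + C(c,2) + C(d,2)`. -/
def La (α : ℕ × ℕ × ℕ × ℕ) : ℕ :=
  α.1.choose 2 + α.2.1.choose 2 + α.2.2.1.choose 2 + α.2.2.2.choose 2

/-- `T_α = F_α · q^{L(α)}` with `q = 1/p`. -/
def Ta (n r : ℕ) (p : ℝ) (α : ℕ × ℕ × ℕ × ℕ) : ℝ := Fa n r α * (p⁻¹) ^ (La α)

/- ----------  Auxiliary lemmas  ---------- -/

lemma fact_cast_ne (m : ℕ) : ((m.factorial : ℝ)) ≠ 0 :=
  ne_of_gt (by exact_mod_cast m.factorial_pos)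

lemma Fa_pos (n r : ℕ) (α : ℕ × ℕ × ℕ × ℕ) : 0 < Fa n r α := by
  obtain ⟨a,b,c,d⟩ := α
  have h : ∀ m : ℕ, (0:ℝ) < m.factorial := fun m => by exact_mod_cast m.factorial_pos
  unfold Fa
  positivity

lemma Fa_succ_mul (n r a b c d : ℕ) (h1 : a+1+b ≤ r) (h2 : a+1+c ≤ r) :
    Fa n r (a+1,b,c,d) * (((a:ℝ)+1) * ((n - 4*r + a+b+c+d+1 : ℕ):ℝ)) =
    Fa n r (a,b,c,d) * (((r-a-c : ℕ):ℝ) * ((r-a-b:ℕ):ℝ)) := by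
  obtain ⟨u, hu, hu'⟩ : ∃ u, r - a - c = u + 1 ∧ r - (a+1) - c = u := ⟨r - (a+1) - c, by omega, rfl⟩
  obtain ⟨v, hv, hv'⟩ : ∃ v, r - a - b = v + 1 ∧ r - (a+1) - b = v := ⟨r - (a+1) - b, by omega, rfl⟩
  obtain ⟨w, hw, hw'⟩ : ∃ w, n - 4*r + a + b + c + d = w ∧ n - 4*r + (a+1) + b + c + d = w + 1 :=
    ⟨n - 4*r + a + b + c + d, rfl, by omega⟩
  have hw1 : (n - 4*r + a+b+c+d+1 : ℕ) = w + 1 := by omega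
  simp only [Fa, hu, hu', hv, hv', hw, hw', hw1]
  rw [Nat.factorial_succ a, Nat.factorial_succ u, Nat.factorial_succ v, Nat.factorial_succ w]
  push_cast
  have hne : ∀ m : ℕ, ((m:ℝ)+1) ≠ 0 := fun m => by positivity
  field_simp [fact_cast_ne]

lemma La_succ (a b c d : ℕ) : La (a+1,b,c,d) = La (a,b,c,d) + a := by
  simp only [La]
  have : (a+1).choose 2 = a.choose 2 + a := by
    rw [Nat.choose_succ_succ]
    simp [Nat.choose_one_right]; ring
  omega

lemma Ta_lt (n r a b c d : ℕ) (p : ℝ) (hp : 0 < p) (h1 : a+1+b ≤ r) (h2 : a+1+c ≤ r)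
    (hkey : ((r-a-c : ℕ):ℝ) * ((r-a-b:ℕ):ℝ) * (p⁻¹)^a
      < ((a:ℝ)+1) * ((n - 4*r + a+b+c+d+1 : ℕ):ℝ)) :
    Ta n r p (a+1,b,c,d) < Ta n r p (a,b,c,d) := by
  have hq0 : (0:ℝ) < p⁻¹ := inv_pos.mpr hp
  have hTa : 0 < Ta n r p (a,b,c,d) := mul_pos (Fa_pos n r _) (pow_pos hq0 _)
  have hD : (0:ℝ) < ((a:ℝ)+1) * ((n - 4*r + a+b+c+d+1 : ℕ):ℝ) := by
    have h1' : (0:ℝ) < (a:ℝ)+1 := by positivity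
    have h2' : (0:ℝ) < ((n - 4*r + a+b+c+d+1 : ℕ):ℝ) := by
      exact_mod_cast Nat.succ_pos (n - 4*r + a+b+c+d)
    exact mul_pos h1' h2'
  have hF := Fa_succ_mul n r a b c d h1 h2
  have hident : Ta n r p (a+1,b,c,d) * (((a:ℝ)+1) * ((n - 4*r + a+b+c+d+1 : ℕ):ℝ)) =
      Ta n r p (a,b,c,d) * (((r-a-c : ℕ):ℝ) * ((r-a-b:ℕ):ℝ) * (p⁻¹)^a) := by
    simp only [Ta, La_succ, pow_add]
    linear_combination ((p:ℝ)⁻¹ ^ (La (a,b,c,d)) * (p⁻¹)^a) * hF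
  have hlt : Ta n r p (a+1,b,c,d) * (((a:ℝ)+1) * ((n - 4*r + a+b+c+d+1 : ℕ):ℝ)) <
      Ta n r p (a,b,c,d) * (((a:ℝ)+1) * ((n - 4*r + a+b+c+d+1 : ℕ):ℝ)) := by
    rw [hident]
    exact mul_lt_mul_of_pos_left hkey hTa
  exact lt_of_mul_lt_mul_right hlt hD.le

lemma ev_logb_le_mul (q c : ℝ) (hq : 1 < q) (hc : 0 < c) :
    ∀ᶠ x : ℝ in atTop, Real.logb q x ≤ c * x := by
  have hlq : 0 < Real.log q := Real.log_pos hq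
  have h := Real.isLittleO_log_id_atTop.bound (mul_pos hc hlq)
  filter_upwards [h, eventually_ge_atTop (0:ℝ)] with x hx hx0
  rw [Real.logb, div_le_iff₀ hlq]
  calc Real.log x ≤ |Real.log x| := le_abs_self _
    _ ≤ c * Real.log q * ‖id x‖ := by simpa using hx
    _ = c * Real.log q * x := by simp [abs_of_nonneg hx0]
    _ = c * x * Real.log q := by ring

lemma ev_mul_logb_lt_rpow (q K d : ℝ) (hq : 1 < q) (hK : 0 < K) (hd : 0 < d) :
    ∀ᶠ x : ℝ in atTop, K * Real.logb q x < x ^ d := by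
  have hlq : 0 < Real.log q := Real.log_pos hq
  have h := (isLittleO_log_rpow_atTop hd).bound (c := Real.log q / (2*K)) (by positivity)
  filter_upwards [h, eventually_ge_atTop (1:ℝ)] with x hx hx1
  have hx0 : (0:ℝ) < x := by linarith
  have hxd : (0:ℝ) < x ^ d := Real.rpow_pos_of_pos hx0 d
  have hlog : Real.log x ≤ Real.log q / (2*K) * x ^ d := by
    calc Real.log x ≤ |Real.log x| := le_abs_self _
      _ ≤ Real.log q / (2*K) * ‖x ^ d‖ := by simpa using hx
      _ = Real.log q / (2*K) * x ^ d := by rw [Real.norm_eq_abs, abs_of_pos hxd]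
  have h2 : K * Real.log x ≤ Real.log q * x ^ d / 2 := by
    have : K * (Real.log q / (2*K) * x ^ d) = Real.log q * x ^ d / 2 := by
      field_simp
    nlinarith
  have h3 : K * Real.logb q x ≤ x ^ d / 2 := by
    rw [Real.logb, mul_div_assoc', div_le_iff₀ hlq]
    calc K * Real.log x ≤ Real.log q * x ^ d / 2 := h2
      _ = x ^ d / 2 * Real.log q := by ring
  linarith

set_option maxHeartbeats 1000000 in
lemma core_ineq
    (q K lam δ μ C1 Lr s rr nn : ℝ) (a : ℕ) (x : ℝ)
    (hq : 1 < q) (hK : 0 < K) (hlam0 : 0 < lam) (hlam1 : lam < 1)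
    (hμdef : μ = 1 - lam * K) (hμ : 0 < μ)
    (hδ : 0 < δ) (hδ1 : δ ≤ μ / (4*K)) (hδ2 : δ ≤ μ/8) (hδ3 : δ ≤ 1/8)
    (hL1 : 1 ≤ Lr)
    (hlogbL0 : 0 ≤ Real.logb q Lr)
    (hsdef : s = 2*Lr - 2*Real.logb q Lr + C1)
    (hs2L : s ≤ 2*Lr) (hs1 : 1 ≤ s)
    (hqs : q ^ (s/2) = K * nn / (2*Lr))
    (hqdL : q ^ (δ*Lr) = nn ^ (δ:ℝ))
    (hF7 : Real.logb q Lr + |C1|/2 + 1 ≤ δ * Lr)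
    (hF9 : 4*K*|C1|/μ ≤ Lr)
    (hF5 : 4*K*Lr < nn ^ (δ:ℝ))
    (hF8 : 8*Lr ≤ (μ/4)*nn)
    (hF6 : 8*Lr ≤ nn/2)
    (hr_le : rr ≤ s) (hr_gt : s - 1 < rr) (hr0 : 0 ≤ rr)
    (hn1 : 1 ≤ nn)
    (ha : (a:ℝ) ≤ rr/2)
    (hx0 : 0 ≤ x)
    (hx : x ≤ rr - a - (1-lam)*Lr) :
    rr * x * q ^ a < ((a:ℝ)+1) * (nn - 4*rr + 1) := by
  have hq0 : (0:ℝ) < q := lt_trans one_pos hq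
  have hL0 : (0:ℝ) < Lr := lt_of_lt_of_le one_pos hL1
  have hn0 : (0:ℝ) < nn := lt_of_lt_of_le one_pos hn1
  have hnd : (0:ℝ) < nn ^ (δ:ℝ) := Real.rpow_pos_of_pos hn0 δ
  have ha0 : (0:ℝ) ≤ (a:ℝ) := Nat.cast_nonneg a
  have hrr2L : rr ≤ 2*Lr := hr_le.trans hs2L
  have hxr : x ≤ rr := by
    have := mul_nonneg (by linarith : (0:ℝ) ≤ 1 - lam) hL0.le
    linarith
  have hμle : μ ≤ 1 := by
    have := mul_pos hlam0 hK
    linarith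
  have hRHSn : nn/2 ≤ nn - 4*rr + 1 := by linarith
  have hRHS0 : (0:ℝ) ≤ nn - 4*rr + 1 := by linarith
  have hqa : q ^ a = q ^ ((a:ℝ)) := (Real.rpow_natCast q a).symm
  have hqanneg : (0:ℝ) ≤ q ^ a := pow_nonneg hq0.le a
  by_cases hcase : (a:ℝ) ≤ rr/2 - δ*Lr
  · -- Case A
    have hexp : (a:ℝ) ≤ s/2 - δ*Lr := by linarith
    have hqb : q ^ a ≤ K * nn / (2*Lr) / nn ^ (δ:ℝ) := by
      rw [hqa, ← hqs, ← hqdL, ← Real.rpow_sub hq0]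
      exact Real.rpow_le_rpow_of_exponent_le hq.le hexp
    have hB0 : (0:ℝ) ≤ K * nn / (2*Lr) / nn ^ (δ:ℝ) := by positivity
    have step1 : rr * x * q ^ a ≤ (2*Lr) * (2*Lr) * (K * nn / (2*Lr) / nn ^ (δ:ℝ)) := by
      have h1 : rr * x ≤ (2*Lr) * (2*Lr) :=
        mul_le_mul hrr2L (hxr.trans hrr2L) hx0 (by linarith)
      have h2 : (0:ℝ) ≤ rr * x := mul_nonneg hr0 hx0
      calc rr * x * q ^ a ≤ rr * x * (K * nn / (2*Lr) / nn ^ (δ:ℝ)) :=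
            mul_le_mul_of_nonneg_left hqb h2
        _ ≤ (2*Lr) * (2*Lr) * (K * nn / (2*Lr) / nn ^ (δ:ℝ)) :=
            mul_le_mul_of_nonneg_right h1 hB0
    have step2 : (2*Lr) * (2*Lr) * (K * nn / (2*Lr) / nn ^ (δ:ℝ)) = 2*Lr*K*nn / nn ^ (δ:ℝ) := by
      field_simp
    have step3 : 2*Lr*K*nn / nn ^ (δ:ℝ) < nn/2 := by
      rw [div_lt_iff₀ hnd]
      have := mul_lt_mul_of_pos_right hF5 (by linarith : (0:ℝ) < nn/2)
      linarith
    have step4 : nn/2 ≤ ((a:ℝ)+1) * (nn - 4*rr + 1) := by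
      have := mul_nonneg ha0 hRHS0
      linarith [this, hRHSn]
    calc rr * x * q ^ a ≤ 2*Lr*K*nn / nn ^ (δ:ℝ) := by rw [← step2]; exact step1
      _ < nn/2 := step3
      _ ≤ ((a:ℝ)+1) * (nn - 4*rr + 1) := step4
  · -- Case B
    push_neg at hcase
    have habs1 : -|C1| ≤ C1 := neg_abs_le C1
    have habs2 : C1 ≤ |C1| := le_abs_self C1
    have hX : x ≤ (lam+δ)*Lr + C1/2 := by linarith
    have ha1 : (1-2*δ)*Lr ≤ (a:ℝ)+1 := by linarith
    have hqb : q ^ a ≤ K * nn / (2*Lr) := by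
      rw [hqa, ← hqs]
      exact Real.rpow_le_rpow_of_exponent_le hq.le (by linarith)
    have hXpos : (0:ℝ) ≤ (lam+δ)*Lr + C1/2 := le_trans hx0 hX
    have hB0 : (0:ℝ) ≤ K * nn / (2*Lr) := by positivity
    have step1 : rr * x * q ^ a ≤ (2*Lr) * ((lam+δ)*Lr + C1/2) * (K * nn / (2*Lr)) := by
      have h1 : rr * x ≤ (2*Lr) * ((lam+δ)*Lr + C1/2) :=
        mul_le_mul hrr2L hX hx0 (by linarith)
      have h2 : (0:ℝ) ≤ rr * x := mul_nonneg hr0 hx0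
      calc rr * x * q ^ a ≤ rr * x * (K * nn / (2*Lr)) := mul_le_mul_of_nonneg_left hqb h2
        _ ≤ (2*Lr) * ((lam+δ)*Lr + C1/2) * (K * nn / (2*Lr)) := mul_le_mul_of_nonneg_right h1 hB0
    have step2 : (2*Lr) * ((lam+δ)*Lr + C1/2) * (K * nn / (2*Lr)) = K * ((lam+δ)*Lr + C1/2) * nn := by
      field_simp
    have h1 : δ * K ≤ μ/4 := by
      rw [le_div_iff₀ (by positivity : (0:ℝ) < 4*K)] at hδ1
      linarith
    have h2 : K * |C1| / 2 ≤ μ * Lr / 8 := by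
      rw [div_le_iff₀ hμ] at hF9
      linarith
    have h3 : K * (C1/2) ≤ μ * Lr / 8 := by
      have hkc : K * C1 ≤ K * |C1| := mul_le_mul_of_nonneg_left habs2 hK.le
      linarith
    have hKX : K * ((lam+δ)*Lr + C1/2) ≤ (1 - 5*μ/8) * Lr := by
      have e : μ * Lr = Lr - lam*K*Lr := by rw [hμdef]; ring
      have h1' := mul_le_mul_of_nonneg_right h1 hL0.le
      linarith
    have step3 : (1 - 5*μ/8) * Lr * nn < (1 - μ/2) * Lr * nn := by
      have := mul_pos (mul_pos hμ hL0) hn0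
      linarith
    have step4 : (1 - μ/2) * Lr * nn ≤ ((a:ℝ)+1) * (nn - 4*rr + 1) := by
      have hg1 : (1 - μ/4) * nn ≤ nn - 4*rr + 1 := by linarith
      have hg3 : (0:ℝ) ≤ (1 - μ/4) * nn := mul_nonneg (by linarith) hn0.le
      have hco : (1 - μ/2) ≤ (1-2*δ)*(1 - μ/4) := by
        have := mul_nonneg hδ.le hμ.le
        linarith [this, hδ2]
      calc (1 - μ/2) * Lr * nn = (1-μ/2) * (Lr*nn) := by ring
        _ ≤ ((1-2*δ)*(1-μ/4)) * (Lr*nn) :=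
            mul_le_mul_of_nonneg_right hco (by positivity)
        _ = (1-2*δ)*Lr * ((1-μ/4)*nn) := by ring
        _ ≤ ((a:ℝ)+1) * (nn - 4*rr + 1) :=
            mul_le_mul ha1 hg1 hg3 (by linarith)
    calc rr * x * q ^ a ≤ K * ((lam+δ)*Lr + C1/2) * nn := by rw [← step2]; exact step1
      _ ≤ (1 - 5*μ/8) * Lr * nn := mul_le_mul_of_nonneg_right hKX hn0.le
      _ < (1 - μ/2) * Lr * nn := step3
      _ ≤ ((a:ℝ)+1) * (nn - 4*rr + 1) := step4

/-- For `r = r(n) = ⌊z(n,p) − ε⌋` there exists `N` such that for all `n ≥ N`: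
if `α = (a,b,c,d) ∈ D` and `α' = (a+1,b,c,d) ∈ D`, with `a ≤ r/2` and
`max(b,c) > (1−λ)·log_q n`, then `T_α > T_{α'}`. -/
theorem stmt16 (p ε lam : ℝ) (hp0 : 0 < p) (hp1 : p < 1) (hε : 0 < ε) (hε' : ε < 1/2)
    (hlam0 : 0 < lam) (hlam1 : lam < 1 / (1 + Real.exp 1 * p⁻¹)) :
    ∃ N : ℕ, ∀ n : ℕ, N ≤ n → ∀ a b c d : ℕ,
      (a, b, c, d) ∈ Dset ⌊zf p n - ε⌋.toNat →
      (a + 1, b, c, d) ∈ Dset ⌊zf p n - ε⌋.toNat →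
      (a : ℝ) ≤ (⌊zf p n - ε⌋.toNat : ℝ) / 2 →
      (1 - lam) * Real.logb p⁻¹ n < (max b c : ℝ) →
      Ta n ⌊zf p n - ε⌋.toNat p (a + 1, b, c, d) < Ta n ⌊zf p n - ε⌋.toNat p (a, b, c, d) := by
  have hq : 1 < p⁻¹ := one_lt_inv_iff₀.mpr ⟨hp0, hp1⟩
  have hq0 : (0:ℝ) < p⁻¹ := lt_trans one_pos hq
  have hq1 : p⁻¹ ≠ (1:ℝ) := ne_of_gt hq
  have hE : (0:ℝ) < Real.exp 1 := Real.exp_pos 1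
  have hE1 : (1:ℝ) < Real.exp 1 := by
    have := Real.add_one_lt_exp (x := 1) one_ne_zero
    linarith
  set q' : ℝ := p⁻¹ ^ ((1-ε)/2 : ℝ) with hq'def
  have hq'pos : 0 < q' := Real.rpow_pos_of_pos hq0 _
  have hq'q : q' < p⁻¹ := by
    rw [hq'def]
    nth_rewrite 2 [← Real.rpow_one p⁻¹]
    exact Real.rpow_lt_rpow_of_exponent_lt hq (by linarith)
  set K : ℝ := Real.exp 1 * q' with hKdef
  have hK : 0 < K := mul_pos hE hq'pos
  have hEq : (0:ℝ) < Real.exp 1 * p⁻¹ := mul_pos hE hq0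
  have hlamK : lam * K < 1 := by
    have h1 : K < 1 + Real.exp 1 * p⁻¹ := by
      have : Real.exp 1 * q' < Real.exp 1 * p⁻¹ := by
        exact mul_lt_mul_of_pos_left hq'q hE
      rw [hKdef]; linarith
    have h2 : lam * K < (1/(1+Real.exp 1 * p⁻¹)) * (1+Real.exp 1*p⁻¹) :=
      mul_lt_mul'' hlam1 h1 hlam0.le hK.le
    rwa [one_div_mul_cancel (by positivity)] at h2
  set μ : ℝ := 1 - lam*K with hμdef
  have hμ : 0 < μ := by rw [hμdef]; linarith
  have hlam1' : lam < 1 := by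
    have h : 1/(1+Real.exp 1*p⁻¹) < 1 := by
      rw [div_lt_one (by linarith)]; linarith
    linarith
  set δ : ℝ := min (μ/(4*K)) (min (μ/8) (1/8)) with hδdef
  have hδ : 0 < δ :=
    lt_min (by positivity) (lt_min (by positivity) (by norm_num))
  have hδ1 : δ ≤ μ/(4*K) := min_le_left _ _
  have hδ2 : δ ≤ μ/8 := (min_le_right _ _).trans (min_le_left _ _)
  have hδ3 : δ ≤ 1/8 := (min_le_right _ _).trans (min_le_right _ _)
  set C1 : ℝ := 2*Real.logb p⁻¹ (Real.exp 1/2) + 1 - ε with hC1def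
  clear_value q' K μ δ C1
  -- tendsto facts
  have hLtend : Tendsto (fun n : ℕ => Real.logb p⁻¹ n) atTop atTop :=
    (Real.tendsto_logb_atTop hq).comp tendsto_natCast_atTop_atTop
  have hlogbLtend : Tendsto (fun n : ℕ => Real.logb p⁻¹ (Real.logb p⁻¹ n)) atTop atTop :=
    (Real.tendsto_logb_atTop hq).comp hLtend
  -- eventual facts
  have F1 : ∀ᶠ n : ℕ in atTop, 1 ≤ Real.logb p⁻¹ n := hLtend.eventually_ge_atTop 1
  have F4b : ∀ᶠ n : ℕ in atTop, 1 - C1 ≤ Real.logb p⁻¹ n := hLtend.eventually_ge_atTop _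
  have F9 : ∀ᶠ n : ℕ in atTop, 4*K*|C1|/μ ≤ Real.logb p⁻¹ n := hLtend.eventually_ge_atTop _
  have F3 : ∀ᶠ n : ℕ in atTop, C1/2 ≤ Real.logb p⁻¹ (Real.logb p⁻¹ n) :=
    hlogbLtend.eventually_ge_atTop _
  have F4a : ∀ᶠ n : ℕ in atTop,
      Real.logb p⁻¹ (Real.logb p⁻¹ n) ≤ (1/2) * Real.logb p⁻¹ n :=
    hLtend.eventually (ev_logb_le_mul p⁻¹ (1/2) hq (by norm_num))
  have F7a : ∀ᶠ n : ℕ in atTop,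
      Real.logb p⁻¹ (Real.logb p⁻¹ n) ≤ (δ/2) * Real.logb p⁻¹ n :=
    hLtend.eventually (ev_logb_le_mul p⁻¹ (δ/2) hq (by positivity))
  have F7b : ∀ᶠ n : ℕ in atTop, (|C1|+2)/δ ≤ Real.logb p⁻¹ n := hLtend.eventually_ge_atTop _
  have F5 : ∀ᶠ n : ℕ in atTop, 4*K*Real.logb p⁻¹ n < (n:ℝ)^(δ:ℝ) :=
    tendsto_natCast_atTop_atTop.eventually (ev_mul_logb_lt_rpow p⁻¹ (4*K) δ hq (by positivity) hδ)
  have F8 : ∀ᶠ n : ℕ in atTop, Real.logb p⁻¹ n ≤ (μ/32) * (n:ℝ) :=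
    tendsto_natCast_atTop_atTop.eventually (ev_logb_le_mul p⁻¹ (μ/32) hq (by positivity))
  have F6 : ∀ᶠ n : ℕ in atTop, Real.logb p⁻¹ n ≤ (1/16) * (n:ℝ) :=
    tendsto_natCast_atTop_atTop.eventually (ev_logb_le_mul p⁻¹ (1/16) hq (by norm_num))
  have Fn1 : ∀ᶠ n : ℕ in atTop, 1 ≤ n := eventually_ge_atTop 1
  have Hall := (((((((((F1.and F4b).and F9).and F3).and F4a).and F7a).and F7b).and F5).and F8).and
    F6).and Fn1
  rw [eventually_atTop] at Hall
  obtain ⟨N, hN⟩ := Hall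
  refine ⟨N, fun n hn => ?_⟩
  obtain ⟨⟨⟨⟨⟨⟨⟨⟨⟨⟨h1, h4b⟩, h9⟩, h3⟩, h4a⟩, h7a⟩, h7b⟩, h5⟩, h8⟩, h6⟩, hn1⟩ := hN n hn
  intro a b c d hD hD' ha hmax
  set Ln : ℝ := Real.logb p⁻¹ n with hLndef
  set r : ℕ := ⌊zf p n - ε⌋.toNat with hrdef
  clear_value Ln r
  -- basic facts about n, Ln, s, r
  have hnR1 : (1:ℝ) ≤ (n:ℝ) := by exact_mod_cast hn1
  have hnR0 : (0:ℝ) < (n:ℝ) := by linarith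
  have hL0 : (0:ℝ) < Ln := by linarith
  have hlogbL0 : 0 ≤ Real.logb p⁻¹ Ln := Real.logb_nonneg hq h1
  have hsdef : zf p n - ε = 2*Ln - 2*Real.logb p⁻¹ Ln + C1 := by
    simp only [zf, hC1def, hLndef]; ring
  have hs1 : 1 ≤ zf p n - ε := by rw [hsdef]; linarith
  have hs2L : zf p n - ε ≤ 2*Ln := by rw [hsdef]; linarith
  have hfl0 : (0:ℤ) ≤ ⌊zf p n - ε⌋ := Int.floor_nonneg.mpr (by linarith)
  have hrcastZ : ((r:ℕ):ℤ) = ⌊zf p n - ε⌋ := by rw [hrdef]; exact Int.toNat_of_nonneg hfl0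
  have hrcast : ((r:ℕ):ℝ) = ((⌊zf p n - ε⌋ : ℤ):ℝ) := by exact_mod_cast hrcastZ
  have hr_le : ((r:ℕ):ℝ) ≤ zf p n - ε := by rw [hrcast]; exact Int.floor_le _
  have hr_gt : zf p n - ε - 1 < ((r:ℕ):ℝ) := by rw [hrcast]; exact Int.sub_one_lt_floor _
  have hr0 : (0:ℝ) ≤ ((r:ℕ):ℝ) := Nat.cast_nonneg r
  have hF7 : Real.logb p⁻¹ Ln + |C1|/2 + 1 ≤ δ * Ln := by
    have hb : |C1| + 2 ≤ Ln * δ := by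
      rw [div_le_iff₀ hδ] at h7b
      exact h7b
    linarith [h7a, hb]
  have hF9 : 4*K*|C1|/μ ≤ Ln := h9
  have hF5 : 4*K*Ln < (n:ℝ)^(δ:ℝ) := h5
  have hF8 : 8*Ln ≤ (μ/4)*(n:ℝ) := by linarith
  have hF6 : 8*Ln ≤ (n:ℝ)/2 := by linarith
  -- the rpow identities
  have hqLn : p⁻¹ ^ (Ln : ℝ) = (n:ℝ) := by
    rw [hLndef]; exact Real.rpow_logb hq0 hq1 hnR0
  have hqs : p⁻¹ ^ ((zf p n - ε)/2) = K * (n:ℝ) / (2*Ln) := by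
    have hsplit : (zf p n - ε)/2
        = Ln - Real.logb p⁻¹ Ln + Real.logb p⁻¹ (Real.exp 1/2) + (1-ε)/2 := by
      rw [hsdef, hC1def]; ring
    rw [hsplit]
    rw [show Ln - Real.logb p⁻¹ Ln + Real.logb p⁻¹ (Real.exp 1/2) + (1-ε)/2
        = (Ln - Real.logb p⁻¹ Ln + Real.logb p⁻¹ (Real.exp 1/2)) + (1-ε)/2 from by ring]
    rw [Real.rpow_add hq0, Real.rpow_add hq0, Real.rpow_sub hq0]
    rw [hqLn, Real.rpow_logb hq0 hq1 hL0,
      Real.rpow_logb hq0 hq1 (by positivity : (0:ℝ) < Real.exp 1/2)]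
    rw [← hq'def, hKdef]
    field_simp
  have hqdL : p⁻¹ ^ (δ*Ln) = (n:ℝ)^(δ:ℝ) := by
    rw [mul_comm δ Ln, Real.rpow_mul hq0.le, hqLn]
  -- extract the D-set conditions
  simp only [Dset, Finset.mem_filter] at hD hD'
  obtain ⟨-, hab, hac, -, -⟩ := hD'
  -- 4r ≤ n
  have h4rR : 4*((r:ℕ):ℝ) ≤ (n:ℝ) := by linarith
  have h4rn : 4*r ≤ n := by exact_mod_cast h4rR
  -- apply Ta_lt; it remains to prove the key numeric inequality
  refine Ta_lt n r a b c d p hp0 hab hac ?_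
  have e1 : ((r - a - c : ℕ):ℝ) = ((r:ℕ):ℝ) - a - c := by
    rw [Nat.cast_sub (show c ≤ r - a by omega), Nat.cast_sub (show a ≤ r by omega)]
  have e2 : ((r - a - b : ℕ):ℝ) = ((r:ℕ):ℝ) - a - b := by
    rw [Nat.cast_sub (show b ≤ r - a by omega), Nat.cast_sub (show a ≤ r by omega)]
  have e3 : ((n - 4*r + a + b + c + d + 1 : ℕ):ℝ) = (n:ℝ) - 4*((r:ℕ):ℝ) + a + b + c + d + 1 := by
    push_cast [Nat.cast_sub h4rn]
    ring
  rw [e1, e2, e3]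
  have haR : (0:ℝ) ≤ (a:ℝ) := Nat.cast_nonneg a
  have hbR : (0:ℝ) ≤ (b:ℝ) := Nat.cast_nonneg b
  have hcR : (0:ℝ) ≤ (c:ℝ) := Nat.cast_nonneg c
  have hdR : (0:ℝ) ≤ (d:ℝ) := Nat.cast_nonneg d
  have hx0c : (0:ℝ) ≤ ((r:ℕ):ℝ) - a - c := by
    have : ((a:ℝ)+1+c) ≤ ((r:ℕ):ℝ) := by exact_mod_cast hac
    linarith
  have hx0b : (0:ℝ) ≤ ((r:ℕ):ℝ) - a - b := by
    have : ((a:ℝ)+1+b) ≤ ((r:ℕ):ℝ) := by exact_mod_cast hab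
    linarith
  have hpow0 : (0:ℝ) ≤ (p⁻¹)^a := pow_nonneg hq0.le a
  have habcd : (n:ℝ) - 4*((r:ℕ):ℝ) + 1 ≤ (n:ℝ) - 4*((r:ℕ):ℝ) + a + b + c + d + 1 := by
    linarith
  rcases le_total b c with hbc | hbc
  · have hmaxc : (1-lam)*Ln < (c:ℝ) := by
      have hmm : ((b:ℝ) ⊔ (c:ℝ)) = (c:ℝ) := max_eq_right (by exact_mod_cast hbc)
      rwa [hmm] at hmax
    have hcore := core_ineq p⁻¹ K lam δ μ C1 Ln (zf p n - ε) ((r:ℕ):ℝ) (n:ℝ) a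
      (((r:ℕ):ℝ) - a - c)
      hq hK hlam0 hlam1' hμdef hμ hδ hδ1 hδ2 hδ3 h1 hlogbL0 hsdef hs2L hs1 hqs hqdL
      hF7 hF9 hF5 hF8 hF6 hr_le hr_gt hr0 hnR1 ha hx0c (by linarith)
    calc (((r:ℕ):ℝ) - a - c) * (((r:ℕ):ℝ) - a - b) * (p⁻¹)^a
        ≤ (((r:ℕ):ℝ) - a - c) * ((r:ℕ):ℝ) * (p⁻¹)^a := by
          refine mul_le_mul_of_nonneg_right ?_ hpow0
          exact mul_le_mul_of_nonneg_left (by linarith) hx0c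
      _ = ((r:ℕ):ℝ) * (((r:ℕ):ℝ) - a - c) * (p⁻¹)^a := by ring
      _ < ((a:ℝ)+1) * ((n:ℝ) - 4*((r:ℕ):ℝ) + 1) := hcore
      _ ≤ ((a:ℝ)+1) * ((n:ℝ) - 4*((r:ℕ):ℝ) + a + b + c + d + 1) :=
          mul_le_mul_of_nonneg_left habcd (by positivity)
  · have hmaxb : (1-lam)*Ln < (b:ℝ) := by
      have hmm : ((b:ℝ) ⊔ (c:ℝ)) = (b:ℝ) := max_eq_left (by exact_mod_cast hbc)
      rwa [hmm] at hmax
    have hcore := core_ineq p⁻¹ K lam δ μ C1 Ln (zf p n - ε) ((r:ℕ):ℝ) (n:ℝ) a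
      (((r:ℕ):ℝ) - a - b)
      hq hK hlam0 hlam1' hμdef hμ hδ hδ1 hδ2 hδ3 h1 hlogbL0 hsdef hs2L hs1 hqs hqdL
      hF7 hF9 hF5 hF8 hF6 hr_le hr_gt hr0 hnR1 ha hx0b (by linarith)
    calc (((r:ℕ):ℝ) - a - c) * (((r:ℕ):ℝ) - a - b) * (p⁻¹)^a
        ≤ ((r:ℕ):ℝ) * (((r:ℕ):ℝ) - a - b) * (p⁻¹)^a := by
          refine mul_le_mul_of_nonneg_right ?_ hpow0
          exact mul_le_mul_of_nonneg_right (by linarith) hx0b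
      _ < ((a:ℝ)+1) * ((n:ℝ) - 4*((r:ℕ):ℝ) + 1) := hcore
      _ ≤ ((a:ℝ)+1) * ((n:ℝ) - 4*((r:ℕ):ℝ) + a + b + c + d + 1) :=
          mul_le_mul_of_nonneg_left habcd (by positivity)
end
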